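/- Let K : ℝ² → ℝ be continuously differentiable on an open set U, and let ψ, s : (t₀, t₁) → ℝ be differentiable functions with (ψ(t), s(t)) ∈ U for all t, satisfying the classical curvature flow ODE: ψ'(t) = −K(ψ(t), s(t)) − s(t)·∂K/∂y(ψ(t), s(t)) and s'(t) = s(t)·∂K/∂x(ψ(t), s(t)). Then the quantity I(t) = s(t)·K(ψ(t), s(t)) is constant on (t₀, t₁). -/

import Mathlib

open Set

/-- The classical curvature flow ODE
  `ψ' = -K(ψ,s) - s·∂K/∂y(ψ,s)`, `s' = s·∂K/∂x(ψ,s)`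
is Hamiltonian: the quantity `I(t) = s(t)·K(ψ(t), s(t))` is conserved. -/
theorem classical_curvature_flow_ODE_conserved
    (K : ℝ × ℝ → ℝ) (U : Set (ℝ × ℝ)) (hU : IsOpen U)
    (hK : ContDiffOn ℝ 1 K U)
    (t₀ t₁ : ℝ) (ψ s : ℝ → ℝ)
    (hψ : ∀ t ∈ Ioo t₀ t₁, DifferentiableAt ℝ ψ t)
    (hs : ∀ t ∈ Ioo t₀ t₁, DifferentiableAt ℝ s t)
    (hmem : ∀ t ∈ Ioo t₀ t₁, (ψ t, s t) ∈ U)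
    (hode1 : ∀ t ∈ Ioo t₀ t₁,
      deriv ψ t = -K (ψ t, s t) - s t * fderiv ℝ K (ψ t, s t) (0, 1))
    (hode2 : ∀ t ∈ Ioo t₀ t₁,
      deriv s t = s t * fderiv ℝ K (ψ t, s t) (1, 0)) :
    ∀ t ∈ Ioo t₀ t₁, ∀ t' ∈ Ioo t₀ t₁,
      s t * K (ψ t, s t) = s t' * K (ψ t', s t') := by
  set I : ℝ → ℝ := fun t => s t * K (ψ t, s t) with hI
  have key : ∀ t ∈ Ioo t₀ t₁, HasDerivAt I 0 t := by
    intro t ht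
    have hKd : DifferentiableAt ℝ K (ψ t, s t) :=
      (hK.differentiableOn one_ne_zero).differentiableAt (hU.mem_nhds (hmem t ht))
    have hψd := (hψ t ht).hasDerivAt
    have hsd := (hs t ht).hasDerivAt
    have hpair : HasDerivAt (fun t => (ψ t, s t)) (deriv ψ t, deriv s t) t :=
      HasDerivAt.prodMk hψd hsd
    have hKc : HasDerivAt (fun t => K (ψ t, s t))
        (fderiv ℝ K (ψ t, s t) (deriv ψ t, deriv s t)) t :=
      (hKd.hasFDerivAt.comp_hasDerivAt t hpair)
    have hprod : HasDerivAt I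
        (deriv s t * K (ψ t, s t) +
          s t * fderiv ℝ K (ψ t, s t) (deriv ψ t, deriv s t)) t :=
      hsd.mul hKc
    have hlin : fderiv ℝ K (ψ t, s t) (deriv ψ t, deriv s t)
        = deriv ψ t * fderiv ℝ K (ψ t, s t) (1, 0)
          + deriv s t * fderiv ℝ K (ψ t, s t) (0, 1) := by
      have : (deriv ψ t, deriv s t)
          = deriv ψ t • ((1 : ℝ), (0 : ℝ)) + deriv s t • ((0 : ℝ), (1 : ℝ)) := by
        simp [Prod.ext_iff]
      rw [this, map_add, map_smul, map_smul]
      simp [smul_eq_mul]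
    have hzero : deriv s t * K (ψ t, s t) +
        s t * fderiv ℝ K (ψ t, s t) (deriv ψ t, deriv s t) = 0 := by
      rw [hlin, hode1 t ht, hode2 t ht]; ring
    rwa [hzero] at hprod
  intro t ht t' ht'
  have hconv : Convex ℝ (Ioo t₀ t₁) := convex_Ioo t₀ t₁
  exact hconv.is_const_of_fderivWithin_eq_zero
    (fun x hx => ((key x hx).differentiableAt).differentiableWithinAt)
    (fun x hx => by
      rw [fderivWithin_of_isOpen isOpen_Ioo hx,
        (key x hx).hasFDerivAt.fderiv]
      ext; simp) ht ht'
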